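/- arXiv:1401.8044 — 6 statements merged into one kernel-verified Lean document; each statement's English description precedes it below -/
import Mathlib

section
/- Let A be an N×N real symmetric positive-definite matrix, let V ∈ ℝ^{N×n} have full column rank n, and let S ∈ {0,1}^{N×m} be a sampling matrix with n ≤ m ≤ N. Then there exists a matrix Z ∈ ℝ^{m×n} such that Zᵀ (SᵀAS) Z = VᵀAV. (In particular, the reduced-basis sparsification approximation is exact for a parameter-independent matrix whenever the number of samples is at least the reduced dimension.) -/
open Matrix

/-- The `N × m` sampling matrix whose `j`-th column is the `ι j`-th column of the
`N × N` identity matrix. -/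
def samplingMatrix {N m : ℕ} (ι : Fin m → Fin N) : Matrix (Fin N) (Fin m) ℝ :=
  fun i j => if i = ι j then 1 else 0

lemma posDef_conj {N k : ℕ} {A : Matrix (Fin N) (Fin N) ℝ} (hA : A.PosDef)
    (B : Matrix (Fin N) (Fin k) ℝ) (hB : Function.Injective B.mulVec) :
    (Bᵀ * A * B).PosDef := by
  constructor
  · show (Bᵀ * A * B)ᴴ = _
    have hAe := hA.isHermitian.eq
    rw [Matrix.conjTranspose_eq_transpose_of_trivial] at hAe ⊢
    rw [Matrix.transpose_mul, Matrix.transpose_mul, Matrix.transpose_transpose, hAe]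
    exact (Matrix.mul_assoc _ _ _).symm
  · intro x hx
    have h2 := (hA.conjTranspose_mul_mul_same hB).2 hx
    rwa [Matrix.conjTranspose_eq_transpose_of_trivial] at h2

lemma sampling_mulVec_injective {N m : ℕ} {ι : Fin m → Fin N} (hι : Function.Injective ι) :
    Function.Injective (samplingMatrix ι).mulVec := by
  intro x y h
  funext j
  have := congrFun h (ι j)
  simpa [samplingMatrix, Matrix.mulVec, dotProduct, hι.eq_iff, eq_comm] using this

lemma sampling_orth {N m : ℕ} {ι : Fin m → Fin N} (hι : Function.Injective ι) :
    (samplingMatrix ι)ᵀ * (samplingMatrix ι) = 1 := by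
  ext a b
  simp [samplingMatrix, Matrix.mul_apply, hι.eq_iff, Matrix.one_apply, eq_comm]

open scoped MatrixOrder in
/-- RBS exactness for a parameter-independent SPD matrix: with at least `n` samples there
is a sparse reduced basis `Z` with `Zᵀ (Sᵀ A S) Z = Vᵀ A V`. -/
theorem stmt1 {N n m : ℕ} (hnm : n ≤ m) (hmN : m ≤ N)
    (A : Matrix (Fin N) (Fin N) ℝ) (hA : A.PosDef)
    (V : Matrix (Fin N) (Fin n) ℝ) (hV : V.rank = n)
    (ι : Fin m → Fin N) (hι : Function.Injective ι)
    (S : Matrix (Fin N) (Fin m) ℝ) (hS : S = samplingMatrix ι) :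
    ∃ Z : Matrix (Fin m) (Fin n) ℝ, Zᵀ * (Sᵀ * A * S) * Z = Vᵀ * A * V := by
  subst hS
  -- V has injective mulVec
  have hVinj : Function.Injective V.mulVec := by
    have h1 := LinearMap.finrank_range_add_finrank_ker V.mulVecLin
    rw [show Module.finrank ℝ (LinearMap.range V.mulVecLin) = n from hV,
      Module.finrank_pi] at h1
    simp only [Fintype.card_fin] at h1
    have hker : LinearMap.ker V.mulVecLin = ⊥ :=
      Submodule.finrank_eq_zero.mp (by omega)
    have := LinearMap.ker_eq_bot.mp hker
    intro x y hxy
    exact this (by simpa [Matrix.mulVecLin_apply] using hxy)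
  have hB : (((samplingMatrix ι))ᵀ * A * (samplingMatrix ι)).PosDef :=
    posDef_conj hA _ (sampling_mulVec_injective hι)
  have hC : (Vᵀ * A * V).PosDef := posDef_conj hA V hVinj
  set Q := CFC.sqrt ((samplingMatrix ι)ᵀ * A * (samplingMatrix ι)) with hQdef
  set M := CFC.sqrt (Vᵀ * A * V) with hMdef
  have hQQ : Q * Q = (samplingMatrix ι)ᵀ * A * (samplingMatrix ι) :=
    CFC.sqrt_mul_sqrt_self _ hB.posSemidef.nonneg
  have hMM : M * M = Vᵀ * A * V := CFC.sqrt_mul_sqrt_self _ hC.posSemidef.nonneg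
  have hQsym : Qᵀ = Q := by
    have := (CFC.sqrt_nonneg ((samplingMatrix ι)ᵀ * A * (samplingMatrix ι))).posSemidef.1.eq
    rwa [Matrix.conjTranspose_eq_transpose_of_trivial] at this
  have hMsym : Mᵀ = M := by
    have := (CFC.sqrt_nonneg (Vᵀ * A * V)).posSemidef.1.eq
    rwa [Matrix.conjTranspose_eq_transpose_of_trivial] at this
  have hQdet : IsUnit Q.det := by
    have hBdet : (0:ℝ) < ((samplingMatrix ι)ᵀ * A * (samplingMatrix ι)).det := hB.det_pos
    rw [← hQQ, Matrix.det_mul] at hBdet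
    exact isUnit_iff_ne_zero.mpr (by nlinarith)
  set E := samplingMatrix (Fin.castLE hnm) with hEdef
  have hE : Eᵀ * E = 1 := sampling_orth (Fin.castLE_injective hnm)
  refine ⟨Q⁻¹ * E * M, ?_⟩
  rw [Matrix.transpose_mul, Matrix.transpose_mul, hMsym,
    Matrix.transpose_nonsing_inv, hQsym, ← hQQ]
  simp only [Matrix.mul_assoc]
  rw [Matrix.nonsing_inv_mul_cancel_left _ _ hQdet,
    Matrix.mul_nonsing_inv_cancel_left _ _ hQdet,
    ← Matrix.mul_assoc Eᵀ E M, hE, Matrix.one_mul, ← Matrix.mul_assoc]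
  exact hMM
end

section
/- Let B_s be an m×m real symmetric positive-definite matrix and B_r an (m−1)×(m−1) real symmetric positive-definite matrix whose eigenvalues interlace those of B_s, i.e., λ^{(s)}_i ≤ λ^{(r)}_i ≤ λ^{(s)}_{i+1} for i = 1, …, m−1, where λ^{(s)}_1 ≤ … ≤ λ^{(s)}_m are the eigenvalues of B_s and λ^{(r)}_1 ≤ … ≤ λ^{(r)}_{m−1} are the eigenvalues of B_r. Then there exists a matrix U ∈ ℝ^{m×(m−1)} with orthonormal columns (UᵀU = I_{m−1}) such that Uᵀ B_s U = B_r. -/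
open Matrix

open Finset Polynomial


lemma lag {n : ℕ} (x : Fin (n + 2) → ℝ) (hx : Function.Injective x) (g : Polynomial ℝ)
    (hg : g.degree < (n + 1 : ℕ)) :
    ∑ j, g.eval (x j) / ∏ k ∈ Finset.univ.erase j, (x j - x k) = 0 := by
  have hinj : Set.InjOn x (Finset.univ : Finset (Fin (n + 2))) := hx.injOn
  have hcard : (Finset.univ : Finset (Fin (n + 2))).card = n + 2 := by simp
  have hdeg : g.degree < (Finset.univ : Finset (Fin (n + 2))).card := by
    rw [hcard]; exact hg.trans_le (by exact_mod_cast (by omega : n + 1 ≤ n + 2))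
  have heq := Lagrange.eq_interpolate hinj hdeg
  have hco := congrArg (fun p : Polynomial ℝ => p.coeff (n + 1)) heq
  simp only [Lagrange.interpolate_apply] at hco
  rw [Polynomial.coeff_eq_zero_of_degree_lt hg, Polynomial.finset_sum_coeff] at hco
  have hbasis : ∀ j : Fin (n + 2),
      (Lagrange.basis Finset.univ x j).coeff (n + 1)
        = (∏ k ∈ Finset.univ.erase j, (x j - x k))⁻¹ := by
    intro j
    have hnd : (Lagrange.basis Finset.univ x j).natDegree = n + 1 := by
      rw [Lagrange.natDegree_basis hinj (mem_univ j), hcard]; omega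
    rw [← hnd, Polynomial.coeff_natDegree]
    unfold Lagrange.basis
    rw [Polynomial.leadingCoeff_prod, ← Finset.prod_inv_distrib]
    refine Finset.prod_congr rfl fun k hk => ?_
    have hne : x j ≠ x k := fun h => (Finset.mem_erase.mp hk).1 (hx h).symm
    unfold Lagrange.basisDivisor
    rw [Polynomial.leadingCoeff_mul, Polynomial.leadingCoeff_C,
      Polynomial.leadingCoeff_X_sub_C, mul_one]
  rw [hco]
  refine Finset.sum_congr rfl fun j _ => ?_
  rw [Polynomial.coeff_C_mul, hbasis j, div_eq_mul_inv]

lemma interlace_aux_d1 (r wq L s : ℝ) (hr : r * r = wq) (hA : L ≠ 0) (hs : s ≠ 0) :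
    r / (L * s) * (r / (L * s)) = wq / L ^ 2 * (s * s)⁻¹ := by
  calc r / (L * s) * (r / (L * s)) = (r * r) / ((L * s) * (L * s)) := div_mul_div_comm _ _ _ _
    _ = wq / (L ^ 2 * (s * s)) := by rw [hr]; congr 1; ring
    _ = wq / L ^ 2 * (s * s)⁻¹ := by rw [← div_div, div_eq_mul_inv]

lemma interlace_aux_d2 (r wq L μ s : ℝ) (hr : r * r = wq) (hA : L - μ ≠ 0) (hs : s ≠ 0) :
    r / ((L - μ) * s) * L * (r / ((L - μ) * s))
      = (wq / (L - μ) + μ * (wq / (L - μ) ^ 2)) * (s * s)⁻¹ := by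
  rw [← hr]; field_simp; ring

lemma interlace_aux_o1 (r wq L μ μ' s s' : ℝ) (hr : r * r = wq) (hA : L - μ ≠ 0)
    (hA' : L - μ' ≠ 0) (hμ : μ - μ' ≠ 0) (hs : s ≠ 0) (hs' : s' ≠ 0) :
    r / ((L - μ) * s) * (r / ((L - μ') * s'))
      = ((μ - μ')⁻¹ * (s * s')⁻¹) * (wq / (L - μ) - wq / (L - μ')) := by
  rw [← hr]; field_simp; ring

lemma interlace_aux_o2 (r wq L μ μ' s s' : ℝ) (hr : r * r = wq) (hA : L - μ ≠ 0)
    (hA' : L - μ' ≠ 0) (hμ : μ - μ' ≠ 0) (hs : s ≠ 0) (hs' : s' ≠ 0) :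
    r / ((L - μ) * s) * L * (r / ((L - μ') * s'))
      = (μ * (μ - μ')⁻¹ * (s * s')⁻¹) * (wq / (L - μ) - wq / (L - μ'))
        + (s * s')⁻¹ * (wq / (L - μ')) := by
  rw [← hr]; field_simp; ring

lemma caseB {m : ℕ} (lam : Fin (m + 2) → ℝ) (mu : Fin (m + 1) → ℝ)
    (hlam : Monotone lam)
    (h1 : ∀ i : Fin (m + 1), lam i.castSucc < mu i)
    (h2 : ∀ i : Fin (m + 1), mu i < lam i.succ) :
    ∃ U : Matrix (Fin (m + 2)) (Fin (m + 1)) ℝ,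
      Uᵀ * U = 1 ∧ Uᵀ * Matrix.diagonal lam * U = Matrix.diagonal mu := by
  have hsl : StrictMono lam := Fin.strictMono_iff_lt_succ.mpr fun i => (h1 i).trans (h2 i)
  have hsm : StrictMono mu := Fin.strictMono_iff_lt_succ.mpr fun i => by
    calc mu i.castSucc < lam i.castSucc.succ := h2 i.castSucc
    _ = lam i.succ.castSucc := by rw [Fin.succ_castSucc]
    _ < mu i.succ := h1 i.succ
  -- order relations between lam and mu
  have hlt1 : ∀ (p : Fin (m + 2)) (q : Fin (m + 1)), (q : ℕ) < (p : ℕ) → mu q < lam p := by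
    intro p q h
    calc mu q < lam q.succ := h2 q
    _ ≤ lam p := hlam (by rw [Fin.le_def]; simpa using h)
  have hlt2 : ∀ (p : Fin (m + 2)) (q : Fin (m + 1)), (p : ℕ) ≤ (q : ℕ) → lam p < mu q := by
    intro p q h
    calc lam p ≤ lam q.castSucc := hlam (by rw [Fin.le_def]; simpa using h)
    _ < mu q := h1 q
  have hne : ∀ (p : Fin (m + 2)) (q : Fin (m + 1)), lam p - mu q ≠ 0 := by
    intro p q
    rcases Nat.lt_or_ge (q : ℕ) (p : ℕ) with h | h
    · exact sub_ne_zero.mpr (hlt1 p q h).ne'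
    · exact sub_ne_zero.mpr (hlt2 p q h).ne
  -- the weights
  set D : Fin (m + 2) → ℝ := fun j => ∏ k ∈ Finset.univ.erase j, (lam j - lam k) with hD
  set N : Fin (m + 2) → ℝ := fun j => ∏ i, (lam j - mu i) with hN
  set w : Fin (m + 2) → ℝ := fun j => N j / D j with hw
  have hErase : ∀ j : Fin (m + 2),
      (Finset.univ.erase j) = Finset.image j.succAbove Finset.univ := by
    intro j; ext k
    simp [Finset.mem_erase, Fin.exists_succAbove_eq_iff]
  have hDalt : ∀ j, D j = ∏ i : Fin (m + 1), (lam j - lam (j.succAbove i)) := by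
    intro j
    rw [hD]
    dsimp only
    rw [hErase j, Finset.prod_image (fun a _ b _ h => Fin.succAbove_right_injective h)]
  have hDne : ∀ j, D j ≠ 0 := by
    intro j
    rw [hDalt j]
    exact Finset.prod_ne_zero_iff.mpr fun i _ =>
      sub_ne_zero.mpr (hsl.injective.ne (Fin.succAbove_ne j i).symm)
  have hwpos : ∀ j, 0 < w j := by
    intro j
    have hND : 0 < N j * D j := by
      rw [hN, hDalt j]
      dsimp only
      rw [← Finset.prod_mul_distrib]
      refine Finset.prod_pos fun i _ => ?_
      rcases Nat.lt_or_ge (i : ℕ) (j : ℕ) with h | h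
      · have e1 : mu i < lam j := hlt1 j i h
        have e2 : lam (j.succAbove i) < lam j := by
          rw [Fin.succAbove_of_castSucc_lt j i (by rw [Fin.lt_def]; simpa using h)]
          exact hsl (by rw [Fin.lt_def]; simpa using h)
        exact mul_pos (by linarith) (by linarith)
      · have e1 : lam j < mu i := hlt2 j i h
        have e2 : lam j < lam (j.succAbove i) := by
          rw [Fin.succAbove_of_le_castSucc j i (by rw [Fin.le_def]; simpa using h)]
          exact hsl (by rw [Fin.lt_def]; simpa using Nat.lt_succ_of_le h)
        exact mul_pos_of_neg_of_neg (by linarith) (by linarith)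
    have : w j = (N j * D j) / (D j * D j) := by
      rw [hw]; dsimp only; rw [mul_div_mul_right _ _ (hDne j)]
    rw [this]
    exact div_pos hND (mul_self_pos.mpr (hDne j))
  -- the key sum identity
  have hT : ∀ q : Fin (m + 1), ∑ j, w j / (lam j - mu q) = 0 := by
    intro q
    have hterm : ∀ j, w j / (lam j - mu q)
        = (∏ s : Fin m, (X - C (mu (q.succAbove s))).eval (lam j)) / D j := by
      intro j
      have hNsplit : N j = (lam j - mu q) * ∏ s : Fin m, (lam j - mu (q.succAbove s)) := by
        rw [hN]; dsimp only
        rw [Fin.prod_univ_succAbove (fun i => lam j - mu i) q]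
      simp only [Polynomial.eval_sub, Polynomial.eval_X, Polynomial.eval_C]
      rw [hw]; dsimp only
      rw [hNsplit, mul_comm (lam j - mu q), div_div,
        mul_div_mul_right _ _ (hne j q)]
    calc ∑ j, w j / (lam j - mu q)
        = ∑ j, (∏ s : Fin m, (X - C (mu (q.succAbove s)))).eval (lam j) / D j := by
          refine Finset.sum_congr rfl fun j _ => ?_
          rw [hterm j, Polynomial.eval_prod]
      _ = 0 := by
          refine lag lam hsl.injective _ ?_
          have hdg : (∏ s : Fin m, (X - C (mu (q.succAbove s)))).degree = (m : WithBot ℕ) := by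
            rw [Polynomial.degree_prod]
            simp [Polynomial.degree_X_sub_C]
          rw [hdg]
          exact_mod_cast Nat.lt_succ_self m
  -- normalization constants
  have hSdef : True := trivial
  set S : Fin (m + 1) → ℝ := fun q => ∑ p, w p / (lam p - mu q) ^ 2 with hS
  have hSval : ∀ q, ∑ p, w p / (lam p - mu q) ^ 2 = S q := fun q => rfl
  have hSpos : ∀ q, 0 < S q := by
    intro q
    refine Finset.sum_pos (fun p _ => ?_) Finset.univ_nonempty
    have h := hne p q
    have := hwpos p
    positivity
  have hsSne : ∀ q, Real.sqrt (S q) ≠ 0 := fun q =>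
    (Real.sqrt_pos.mpr (hSpos q)).ne'
  have hsS : ∀ q, Real.sqrt (S q) * Real.sqrt (S q) = S q := fun q =>
    Real.mul_self_sqrt (hSpos q).le
  have hsw : ∀ p, Real.sqrt (w p) * Real.sqrt (w p) = w p := fun p =>
    Real.mul_self_sqrt (hwpos p).le
  set U : Matrix (Fin (m + 2)) (Fin (m + 1)) ℝ :=
    Matrix.of fun p q => Real.sqrt (w p) / ((lam p - mu q) * Real.sqrt (S q)) with hU
  refine ⟨U, ?_, ?_⟩
  · ext q q'
    rw [Matrix.mul_apply]
    simp only [hU, Matrix.transpose_apply, Matrix.of_apply]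
    by_cases hqq : q = q'
    · subst hqq
      have hterm : ∀ p, Real.sqrt (w p) / ((lam p - mu q) * Real.sqrt (S q)) *
          (Real.sqrt (w p) / ((lam p - mu q) * Real.sqrt (S q)))
          = w p / (lam p - mu q) ^ 2 * (Real.sqrt (S q) * Real.sqrt (S q))⁻¹ :=
        fun p => interlace_aux_d1 _ _ _ _ (hsw p) (hne p q) (hsSne q)
      rw [Finset.sum_congr rfl fun p _ => hterm p, ← Finset.sum_mul, hSval q, hsS q,
        mul_inv_cancel₀ (hSpos q).ne', Matrix.one_apply_eq]
    · have hμ : mu q - mu q' ≠ 0 := sub_ne_zero.mpr (fun h => hqq (hsm.injective h))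
      have hterm : ∀ p, Real.sqrt (w p) / ((lam p - mu q) * Real.sqrt (S q)) *
          (Real.sqrt (w p) / ((lam p - mu q') * Real.sqrt (S q')))
          = ((mu q - mu q')⁻¹ * (Real.sqrt (S q) * Real.sqrt (S q'))⁻¹) *
            (w p / (lam p - mu q) - w p / (lam p - mu q')) :=
        fun p => interlace_aux_o1 _ _ _ _ _ _ _ (hsw p) (hne p q) (hne p q') hμ
          (hsSne q) (hsSne q')
      rw [Finset.sum_congr rfl fun p _ => hterm p, ← Finset.mul_sum,
        Finset.sum_sub_distrib, hT q, hT q', sub_zero, mul_zero, Matrix.one_apply_ne hqq]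
  · ext q q'
    rw [Matrix.mul_apply]
    simp only [Matrix.mul_diagonal, hU, Matrix.transpose_apply, Matrix.of_apply]
    by_cases hqq : q = q'
    · subst hqq
      have hterm : ∀ p, Real.sqrt (w p) / ((lam p - mu q) * Real.sqrt (S q)) * lam p *
          (Real.sqrt (w p) / ((lam p - mu q) * Real.sqrt (S q)))
          = (w p / (lam p - mu q) + mu q * (w p / (lam p - mu q) ^ 2)) *
              (Real.sqrt (S q) * Real.sqrt (S q))⁻¹ :=
        fun p => interlace_aux_d2 _ _ _ _ _ (hsw p) (hne p q) (hsSne q)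
      rw [Finset.sum_congr rfl fun p _ => hterm p, ← Finset.sum_mul,
        Finset.sum_add_distrib, hT q, ← Finset.mul_sum, hSval q, zero_add, hsS q,
        mul_assoc, mul_inv_cancel₀ (hSpos q).ne', mul_one,
        Matrix.diagonal_apply_eq]
    · have hμ : mu q - mu q' ≠ 0 := sub_ne_zero.mpr (fun h => hqq (hsm.injective h))
      have hterm : ∀ p, Real.sqrt (w p) / ((lam p - mu q) * Real.sqrt (S q)) * lam p *
          (Real.sqrt (w p) / ((lam p - mu q') * Real.sqrt (S q')))
          = (mu q * (mu q - mu q')⁻¹ * (Real.sqrt (S q) * Real.sqrt (S q'))⁻¹) *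
              (w p / (lam p - mu q) - w p / (lam p - mu q'))
            + (Real.sqrt (S q) * Real.sqrt (S q'))⁻¹ * (w p / (lam p - mu q')) :=
        fun p => interlace_aux_o2 _ _ _ _ _ _ _ (hsw p) (hne p q) (hne p q') hμ
          (hsSne q) (hsSne q')
      rw [Finset.sum_congr rfl fun p _ => hterm p, Finset.sum_add_distrib,
        ← Finset.mul_sum, ← Finset.mul_sum, Finset.sum_sub_distrib,
        hT q, hT q', sub_zero, mul_zero, mul_zero, add_zero,
        Matrix.diagonal_apply_ne _ hqq]

def inclM {n : ℕ} (j : Fin (n + 1)) : Matrix (Fin (n + 1)) (Fin n) ℝ :=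
  Matrix.of fun p t => if p = j.succAbove t then 1 else 0

def unitV {n : ℕ} (j : Fin n) : Fin n → ℝ := fun p => if p = j then 1 else 0

lemma inclM_diag {n : ℕ} (j : Fin (n + 1)) (d : Fin (n + 1) → ℝ) :
    (inclM j)ᵀ * Matrix.diagonal d * inclM j = Matrix.diagonal (d ∘ j.succAbove) := by
  ext t t'
  rw [Matrix.mul_assoc, Matrix.mul_apply]
  simp only [Matrix.transpose_apply, inclM, Matrix.of_apply, Matrix.diagonal_mul]
  rw [Finset.sum_eq_single (j.succAbove t)]
  · rw [if_pos rfl, one_mul, Matrix.diagonal_apply]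
    by_cases h : t = t'
    · subst h; rw [if_pos rfl, if_pos rfl, mul_one]; rfl
    · rw [if_neg (fun hh => h (Fin.succAbove_right_injective hh)), if_neg h, mul_zero]
  · intro p _ hp; rw [if_neg hp, zero_mul]
  · simp

lemma inclM_orth {n : ℕ} (j : Fin (n + 1)) : (inclM j)ᵀ * inclM j = 1 := by
  have h := inclM_diag j (fun _ => 1)
  rw [Matrix.diagonal_one, Matrix.mul_one] at h
  rw [h]
  ext t t'
  rw [Matrix.diagonal_apply, Matrix.one_apply]
  split_ifs <;> rfl

lemma inclM_diag_unit {n k : ℕ} (j : Fin (n + 1)) (d : Fin (n + 1) → ℝ)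
    (v : Fin k → ℝ) :
    (inclM j)ᵀ * (Matrix.diagonal d * Matrix.vecMulVec (unitV j) v) = 0 := by
  ext t q
  rw [Matrix.mul_apply]
  refine Finset.sum_eq_zero fun p _ => ?_
  simp only [Matrix.transpose_apply, inclM, Matrix.of_apply, Matrix.diagonal_mul,
    Matrix.vecMulVec_apply, unitV]
  by_cases hp : p = j.succAbove t
  · subst hp
    rw [if_neg (Fin.succAbove_ne j t)]
    ring
  · rw [if_neg hp]; ring

lemma unit_diag_inclM {n k : ℕ} (j : Fin (n + 1)) (d : Fin (n + 1) → ℝ)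
    (v : Fin k → ℝ) :
    Matrix.vecMulVec v (unitV j) * (Matrix.diagonal d * inclM j) = 0 := by
  ext q t
  rw [Matrix.mul_apply]
  refine Finset.sum_eq_zero fun p _ => ?_
  simp only [Matrix.vecMulVec_apply, unitV, Matrix.diagonal_mul, inclM, Matrix.of_apply]
  by_cases hp : p = j
  · subst hp
    rw [if_neg (Fin.ne_succAbove p t)]
    ring
  · rw [if_neg hp]; ring

lemma unit_diag_unit {n k l : ℕ} (j : Fin (n + 1)) (d : Fin (n + 1) → ℝ)
    (v : Fin k → ℝ) (v' : Fin l → ℝ) :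
    Matrix.vecMulVec v (unitV j) * (Matrix.diagonal d * Matrix.vecMulVec (unitV j) v')
      = d j • Matrix.vecMulVec v v' := by
  ext q q'
  rw [Matrix.mul_apply]
  rw [Finset.sum_eq_single j]
  · simp [Matrix.vecMulVec_apply, unitV, Matrix.diagonal_mul, Matrix.smul_apply]
    ring
  · intro p _ hp
    simp only [Matrix.vecMulVec_apply, unitV, Matrix.diagonal_mul, if_neg hp]
    ring
  · simp

lemma inclM_diag_out {n : ℕ} (i : Fin (n + 1)) (g : Fin n → ℝ) (c : ℝ) :
    inclM i * Matrix.diagonal g * (inclM i)ᵀ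
        + c • Matrix.vecMulVec (unitV i) (unitV i)
      = Matrix.diagonal (i.insertNth c g) := by
  ext q q'
  rw [Matrix.add_apply, Matrix.smul_apply, Matrix.mul_apply]
  simp only [Matrix.mul_diagonal, Matrix.transpose_apply, inclM, Matrix.of_apply,
    Matrix.vecMulVec_apply, unitV, smul_eq_mul]
  by_cases hq : q = i
  · subst hq
    rw [Finset.sum_eq_zero fun s _ => by rw [if_neg (Fin.ne_succAbove q s), zero_mul,
      zero_mul]]
    by_cases hq' : q' = q
    · subst hq'
      simp only [if_pos rfl, Matrix.diagonal_apply_eq, Fin.insertNth_apply_same]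
      norm_num
    · simp only [if_pos rfl, if_neg hq',
        Matrix.diagonal_apply_ne _ (fun h : q = q' => hq' h.symm)]
      ring
  · obtain ⟨s₀, hs₀⟩ := Fin.exists_succAbove_eq (show q ≠ i from hq)
    rw [Finset.sum_eq_single s₀]
    · rw [if_neg hq, if_pos hs₀.symm, one_mul, zero_mul, mul_zero, add_zero]
      by_cases hq' : q' = q
      · subst hq'
        rw [if_pos hs₀.symm, mul_one, ← hs₀, Matrix.diagonal_apply_eq,
          Fin.insertNth_apply_succAbove]
      · rw [if_neg (fun hh : q' = i.succAbove s₀ => hq' (hh.trans hs₀)), mul_zero,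
          Matrix.diagonal_apply_ne _ (fun h => hq' h.symm)]
    · intro s _ hs
      rw [if_neg (fun hh : q = i.succAbove s =>
        hs (Fin.succAbove_right_injective (hs₀.trans hh)).symm), zero_mul, zero_mul]
    · simp

lemma vecMulVec_t {k l : ℕ} (v : Fin k → ℝ) (w : Fin l → ℝ) :
    (Matrix.vecMulVec v w)ᵀ = Matrix.vecMulVec w v := by
  ext p q; simp [Matrix.vecMulVec_apply, mul_comm]

lemma succAbove_le_succ' {n : ℕ} (p : Fin (n + 1)) (k : Fin n) :
    p.succAbove k ≤ k.succ := by
  rcases lt_or_ge k.castSucc p with h | h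
  · rw [Fin.succAbove_of_castSucc_lt _ _ h]; exact (Fin.castSucc_lt_succ (i := k)).le
  · rw [Fin.succAbove_of_le_castSucc _ _ h]

lemma castSucc_le_succAbove' {n : ℕ} (p : Fin (n + 1)) (k : Fin n) :
    k.castSucc ≤ p.succAbove k := by
  rcases lt_or_ge k.castSucc p with h | h
  · rw [Fin.succAbove_of_castSucc_lt _ _ h]
  · rw [Fin.succAbove_of_le_castSucc _ _ h]; exact (Fin.castSucc_lt_succ (i := k)).le

lemma insertStep {a b : ℕ} (lam : Fin (a + 1) → ℝ) (mu : Fin (b + 1) → ℝ)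
    (j : Fin (a + 1)) (i : Fin (b + 1)) (hval : lam j = mu i)
    (U' : Matrix (Fin a) (Fin b) ℝ) (h1 : U'ᵀ * U' = 1)
    (h2 : U'ᵀ * Matrix.diagonal (lam ∘ j.succAbove) * U'
        = Matrix.diagonal (mu ∘ i.succAbove)) :
    ∃ U : Matrix (Fin (a + 1)) (Fin (b + 1)) ℝ,
      Uᵀ * U = 1 ∧ Uᵀ * Matrix.diagonal lam * U = Matrix.diagonal mu := by
  have main : ∀ (d : Fin (a + 1) → ℝ) (G : Matrix (Fin b) (Fin b) ℝ),
      U'ᵀ * Matrix.diagonal (d ∘ j.succAbove) * U' = G →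
      (inclM j * U' * (inclM i)ᵀ + Matrix.vecMulVec (unitV j) (unitV i))ᵀ *
            Matrix.diagonal d *
          (inclM j * U' * (inclM i)ᵀ + Matrix.vecMulVec (unitV j) (unitV i))
        = inclM i * G * (inclM i)ᵀ + d j • Matrix.vecMulVec (unitV i) (unitV i) := by
    intro d G hG
    rw [Matrix.transpose_add, Matrix.transpose_mul, Matrix.transpose_mul,
      Matrix.transpose_transpose, vecMulVec_t]
    rw [Matrix.add_mul, Matrix.add_mul, Matrix.mul_add, Matrix.mul_add]
    have hT1 : inclM i * (U'ᵀ * (inclM j)ᵀ) * Matrix.diagonal d *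
        (inclM j * U' * (inclM i)ᵀ) = inclM i * G * (inclM i)ᵀ := by
      rw [← hG, ← inclM_diag j d]
      simp only [Matrix.mul_assoc]
    have hT2 : inclM i * (U'ᵀ * (inclM j)ᵀ) * Matrix.diagonal d *
        Matrix.vecMulVec (unitV j) (unitV i) = 0 := by
      calc inclM i * (U'ᵀ * (inclM j)ᵀ) * Matrix.diagonal d *
          Matrix.vecMulVec (unitV j) (unitV i)
          = inclM i * U'ᵀ * ((inclM j)ᵀ *
            (Matrix.diagonal d * Matrix.vecMulVec (unitV j) (unitV i))) := by
            simp only [Matrix.mul_assoc]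
        _ = 0 := by rw [inclM_diag_unit j d (unitV i), Matrix.mul_zero]
    have hT3 : Matrix.vecMulVec (unitV i) (unitV j) * Matrix.diagonal d *
        (inclM j * U' * (inclM i)ᵀ) = 0 := by
      calc Matrix.vecMulVec (unitV i) (unitV j) * Matrix.diagonal d *
          (inclM j * U' * (inclM i)ᵀ)
          = (Matrix.vecMulVec (unitV i) (unitV j) * (Matrix.diagonal d * inclM j)) *
            (U' * (inclM i)ᵀ) := by
            simp only [Matrix.mul_assoc]
        _ = 0 := by rw [unit_diag_inclM j d (unitV i), Matrix.zero_mul]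
    have hT4 : Matrix.vecMulVec (unitV i) (unitV j) * Matrix.diagonal d *
        Matrix.vecMulVec (unitV j) (unitV i)
        = d j • Matrix.vecMulVec (unitV i) (unitV i) := by
      rw [Matrix.mul_assoc]
      exact unit_diag_unit j d (unitV i) (unitV i)
    rw [hT1, hT2, hT3, hT4, add_zero, zero_add]
  refine ⟨inclM j * U' * (inclM i)ᵀ + Matrix.vecMulVec (unitV j) (unitV i), ?_, ?_⟩
  · have hdA : Matrix.diagonal (1 : Fin a → ℝ) = 1 := Matrix.diagonal_one
    have hdA1 : Matrix.diagonal (1 : Fin (a + 1) → ℝ) = 1 := Matrix.diagonal_one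
    have hdB : Matrix.diagonal (1 : Fin b → ℝ) = 1 := Matrix.diagonal_one
    have hdB1 : Matrix.diagonal (1 : Fin (b + 1) → ℝ) = 1 := Matrix.diagonal_one
    have hc : (1 : Fin (a + 1) → ℝ) ∘ j.succAbove = (1 : Fin a → ℝ) := rfl
    have hG1 : U'ᵀ * Matrix.diagonal ((1 : Fin (a + 1) → ℝ) ∘ j.succAbove) * U' = 1 := by
      rw [hc, hdA, Matrix.mul_one, h1]
    have hm := main (1 : Fin (a + 1) → ℝ) 1 hG1
    rw [hdA1, Matrix.mul_one, Matrix.mul_one, Pi.one_apply, one_smul] at hm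
    rw [hm]
    have hout := inclM_diag_out i (1 : Fin b → ℝ) 1
    rw [hdB, Matrix.mul_one, one_smul] at hout
    rw [hout]
    have hfin : i.insertNth (1 : ℝ) (1 : Fin b → ℝ) = (1 : Fin (b + 1) → ℝ) := by
      funext q
      rcases eq_or_ne q i with h | h
      · subst h; rw [Fin.insertNth_apply_same]; rfl
      · obtain ⟨s, hs⟩ := Fin.exists_succAbove_eq h
        rw [← hs, Fin.insertNth_apply_succAbove]; rfl
    rw [hfin, hdB1]
  · have hm := main lam (Matrix.diagonal (mu ∘ i.succAbove)) h2
    have hmui : mu = i.insertNth (mu i) (mu ∘ i.succAbove) := by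
      funext q
      rcases eq_or_ne q i with h | h
      · subst h; rw [Fin.insertNth_apply_same]
      · obtain ⟨s, hs⟩ := Fin.exists_succAbove_eq h
        rw [← hs, Fin.insertNth_apply_succAbove]; rfl
    rw [hm, hval, inclM_diag_out i (mu ∘ i.succAbove) (mu i), ← hmui]


lemma keyDiag : ∀ (m : ℕ) (lam : Fin (m + 1) → ℝ) (mu : Fin m → ℝ), Monotone lam → Monotone mu →
    (∀ i : Fin m, lam i.castSucc ≤ mu i ∧ mu i ≤ lam i.succ) →
    ∃ U : Matrix (Fin (m + 1)) (Fin m) ℝ,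
      Uᵀ * U = 1 ∧ Uᵀ * Matrix.diagonal lam * U = Matrix.diagonal mu := by
  intro m
  induction m with
  | zero =>
    intro lam mu _ _ _
    exact ⟨0, by ext t t'; exact t.elim0, by ext t t'; exact t.elim0⟩
  | succ m ih =>
    intro lam mu hlam hmu hinter
    by_cases hstrict : ∀ i : Fin (m + 1), lam i.castSucc < mu i ∧ mu i < lam i.succ
    · exact caseB lam mu hlam (fun i => (hstrict i).1) (fun i => (hstrict i).2)
    · obtain ⟨i, hi⟩ := not_forall.mp hstrict
      have hj : ∃ j : Fin (m + 2), (i : ℕ) ≤ (j : ℕ) ∧ (j : ℕ) ≤ (i : ℕ) + 1 ∧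
          lam j = mu i := by
        rcases not_and_or.mp hi with h | h
        · exact ⟨i.castSucc, by simp, by simp, le_antisymm (hinter i).1 (not_lt.mp h)⟩
        · exact ⟨i.succ, by simp, by simp, le_antisymm (not_lt.mp h) (hinter i).2⟩
      obtain ⟨j, hij1, hij2, hval⟩ := hj
      have hlam' : Monotone (lam ∘ j.succAbove) :=
        hlam.comp (Fin.strictMono_succAbove j).monotone
      have hmu' : Monotone (mu ∘ i.succAbove) :=
        hmu.comp (Fin.strictMono_succAbove i).monotone
      have hinter' : ∀ t : Fin m, (lam ∘ j.succAbove) t.castSucc ≤ (mu ∘ i.succAbove) t ∧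
          (mu ∘ i.succAbove) t ≤ (lam ∘ j.succAbove) t.succ := by
        intro t
        constructor
        · rcases Nat.lt_or_ge (t : ℕ) (i : ℕ) with h | h
          · have e1 : i.succAbove t = t.castSucc :=
              Fin.succAbove_of_castSucc_lt _ _ (by rw [Fin.lt_def]; simpa using h)
            have e2 : j.succAbove t.castSucc = t.castSucc.castSucc :=
              Fin.succAbove_of_castSucc_lt _ _ (by rw [Fin.lt_def]; simp; omega)
            show lam (j.succAbove t.castSucc) ≤ mu (i.succAbove t)
            rw [e1, e2]
            exact (hinter t.castSucc).1
          · have e1 : i.succAbove t = t.succ :=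
              Fin.succAbove_of_le_castSucc _ _ (by rw [Fin.le_def]; simpa using h)
            show lam (j.succAbove t.castSucc) ≤ mu (i.succAbove t)
            rw [e1]
            calc lam (j.succAbove t.castSucc) ≤ lam t.castSucc.succ :=
                hlam (succAbove_le_succ' j t.castSucc)
              _ = lam t.succ.castSucc := by rw [Fin.succ_castSucc]
              _ ≤ mu t.succ := (hinter t.succ).1
        · rcases Nat.lt_or_ge (t : ℕ) (i : ℕ) with h | h
          · have e1 : i.succAbove t = t.castSucc :=
              Fin.succAbove_of_castSucc_lt _ _ (by rw [Fin.lt_def]; simpa using h)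
            show mu (i.succAbove t) ≤ lam (j.succAbove t.succ)
            rw [e1]
            calc mu t.castSucc ≤ lam t.castSucc.succ := (hinter t.castSucc).2
              _ = lam t.succ.castSucc := by rw [Fin.succ_castSucc]
              _ ≤ lam (j.succAbove t.succ) := hlam (castSucc_le_succAbove' j t.succ)
          · have e1 : i.succAbove t = t.succ :=
              Fin.succAbove_of_le_castSucc _ _ (by rw [Fin.le_def]; simpa using h)
            have e2 : j.succAbove t.succ = t.succ.succ :=
              Fin.succAbove_of_le_castSucc _ _ (by rw [Fin.le_def]; simp; omega)
            show mu (i.succAbove t) ≤ lam (j.succAbove t.succ)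
            rw [e1, e2]
            exact (hinter t.succ).2
      obtain ⟨U', hU1, hU2⟩ := ih (lam ∘ j.succAbove) (mu ∘ i.succAbove) hlam' hmu' hinter'
      exact insertStep lam mu j i hval U' hU1 hU2


/-- `lam` is the increasing (with multiplicity) sequence of eigenvalues of the real
symmetric matrix `B`: there is an orthogonal matrix diagonalizing `B` to `diagonal lam`. -/
def IsSortedEigs {k : ℕ} (B : Matrix (Fin k) (Fin k) ℝ) (lam : Fin k → ℝ) : Prop :=
  Monotone lam ∧
    ∃ Q : Matrix (Fin k) (Fin k) ℝ, Qᵀ * Q = 1 ∧ Qᵀ * B * Q = Matrix.diagonal lam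

/-- Converse Cauchy interlacing, codimension-one case: if the eigenvalues of the
`m × m` SPD matrix `B_r` interlace those of the `(m+1) × (m+1)` SPD matrix `B_s`,
then `B_r = Uᵀ B_s U` for some matrix `U` with orthonormal columns. -/
theorem stmt3 {m : ℕ}
    (Bs : Matrix (Fin (m + 1)) (Fin (m + 1)) ℝ) (hBs : Bs.PosDef)
    (Br : Matrix (Fin m) (Fin m) ℝ) (hBr : Br.PosDef)
    (lams : Fin (m + 1) → ℝ) (lamr : Fin m → ℝ)
    (hs : IsSortedEigs Bs lams) (hr : IsSortedEigs Br lamr)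
    (hinter : ∀ i : Fin m, lams i.castSucc ≤ lamr i ∧ lamr i ≤ lams i.succ) :
    ∃ U : Matrix (Fin (m + 1)) (Fin m) ℝ, Uᵀ * U = 1 ∧ Uᵀ * Bs * U = Br := by
  obtain ⟨hmons, Qs, hQs1, hQs2⟩ := hs
  obtain ⟨hmonr, Qr, hQr1, hQr2⟩ := hr
  obtain ⟨U0, hU01, hU02⟩ := keyDiag m lams lamr hmons hmonr hinter
  have hQs1' : Qs * Qsᵀ = 1 := mul_eq_one_comm.mp hQs1
  have hQr1' : Qr * Qrᵀ = 1 := mul_eq_one_comm.mp hQr1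
  refine ⟨Qs * U0 * Qrᵀ, ?_, ?_⟩
  · have h1 : Qsᵀ * (Qs * (U0 * Qrᵀ)) = U0 * Qrᵀ := by
      rw [← Matrix.mul_assoc, hQs1, Matrix.one_mul]
    have h2 : U0ᵀ * (U0 * Qrᵀ) = Qrᵀ := by
      rw [← Matrix.mul_assoc, hU01, Matrix.one_mul]
    calc (Qs * U0 * Qrᵀ)ᵀ * (Qs * U0 * Qrᵀ)
        = Qr * (U0ᵀ * (Qsᵀ * (Qs * (U0 * Qrᵀ)))) := by
          simp only [Matrix.transpose_mul, Matrix.transpose_transpose, Matrix.mul_assoc]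
      _ = 1 := by rw [h1, h2, hQr1']
  · have hA : Qsᵀ * (Bs * (Qs * (U0 * Qrᵀ))) = Matrix.diagonal lams * (U0 * Qrᵀ) := by
      calc Qsᵀ * (Bs * (Qs * (U0 * Qrᵀ)))
          = (Qsᵀ * Bs * Qs) * (U0 * Qrᵀ) := by simp only [Matrix.mul_assoc]
        _ = _ := by rw [hQs2]
    have hB : U0ᵀ * (Matrix.diagonal lams * (U0 * Qrᵀ)) = Matrix.diagonal lamr * Qrᵀ := by
      calc U0ᵀ * (Matrix.diagonal lams * (U0 * Qrᵀ))
          = (U0ᵀ * Matrix.diagonal lams * U0) * Qrᵀ := by simp only [Matrix.mul_assoc]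
        _ = _ := by rw [hU02]
    have hC : Qr * (Matrix.diagonal lamr * Qrᵀ) = Br := by
      calc Qr * (Matrix.diagonal lamr * Qrᵀ)
          = Qr * ((Qrᵀ * Br * Qr) * Qrᵀ) := by rw [hQr2]
        _ = (Qr * Qrᵀ) * Br * (Qr * Qrᵀ) := by simp only [Matrix.mul_assoc]
        _ = Br := by rw [hQr1', Matrix.one_mul, Matrix.mul_one]
    calc (Qs * U0 * Qrᵀ)ᵀ * Bs * (Qs * U0 * Qrᵀ)
        = Qr * (U0ᵀ * (Qsᵀ * (Bs * (Qs * (U0 * Qrᵀ))))) := by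
          simp only [Matrix.transpose_mul, Matrix.transpose_transpose, Matrix.mul_assoc]
      _ = Qr * (U0ᵀ * (Matrix.diagonal lams * (U0 * Qrᵀ))) := by rw [hA]
      _ = Qr * (Matrix.diagonal lamr * Qrᵀ) := by rw [hB]
      _ = Br := hC
end

section
/- Let D_s ∈ ℝ^{m×m} and D_r ∈ ℝ^{n×n} be symmetric positive-definite matrices with lower-triangular Cholesky factors L_s and L_r (D_s = L_s L_sᵀ, D_r = L_r L_rᵀ), and let B_s ∈ ℝ^{m×m} and B_r ∈ ℝ^{n×n} be symmetric positive-definite matrices, with m ≥ n. Then there exists Z ∈ ℝ^{m×n} satisfying both Zᵀ D_s Z = D_r and Zᵀ B_s Z = B_r if and only if there exists U ∈ ℝ^{m×n} with orthonormal columns (UᵀU = Iₙ) satisfying Uᵀ (L_s⁻¹ B_s L_s⁻ᵀ) U = L_r⁻¹ B_r L_r⁻ᵀ. The correspondence is given by U = L_sᵀ Z L_r⁻ᵀ. -/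
open Matrix

/-- `L` is the lower-triangular Cholesky factor of `D`: `L` is lower triangular with
positive diagonal entries and `L Lᵀ = D`. -/
def IsCholeskyFactor {k : ℕ} (L D : Matrix (Fin k) (Fin k) ℝ) : Prop :=
  (∀ i j : Fin k, i < j → L i j = 0) ∧ (∀ i : Fin k, 0 < L i i) ∧ L * Lᵀ = D

lemma cholesky_isUnit_det {k : ℕ} {L D : Matrix (Fin k) (Fin k) ℝ}
    (hD : D.PosDef) (hL : IsCholeskyFactor L D) : IsUnit L.det := by
  have h : L.det * L.det ≠ 0 := by
    have := hD.det_pos.ne'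
    rw [← hL.2.2, det_mul, det_transpose] at this
    exact fun hc => this hc
  exact isUnit_iff_ne_zero.mpr (fun hc => h (by rw [hc, mul_zero]))

/-- Equivalence between the two-matrix congruence problem and the orthonormal
reformulation, with the explicit correspondence `U = Lsᵀ Z Lr⁻ᵀ`. -/
theorem stmt5 {m n : ℕ} (hnm : n ≤ m)
    (Ds Bs : Matrix (Fin m) (Fin m) ℝ) (hDs : Ds.PosDef) (hBs : Bs.PosDef)
    (Dr Br : Matrix (Fin n) (Fin n) ℝ) (hDr : Dr.PosDef) (hBr : Br.PosDef)
    (Ls : Matrix (Fin m) (Fin m) ℝ) (hLs : IsCholeskyFactor Ls Ds)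
    (Lr : Matrix (Fin n) (Fin n) ℝ) (hLr : IsCholeskyFactor Lr Dr) :
    (∀ Z : Matrix (Fin m) (Fin n) ℝ,
        Zᵀ * Ds * Z = Dr → Zᵀ * Bs * Z = Br →
          (Lsᵀ * Z * (Lr⁻¹)ᵀ)ᵀ * (Lsᵀ * Z * (Lr⁻¹)ᵀ) = 1 ∧
          (Lsᵀ * Z * (Lr⁻¹)ᵀ)ᵀ * (Ls⁻¹ * Bs * (Ls⁻¹)ᵀ) * (Lsᵀ * Z * (Lr⁻¹)ᵀ)
            = Lr⁻¹ * Br * (Lr⁻¹)ᵀ) ∧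
    (∀ U : Matrix (Fin m) (Fin n) ℝ,
        Uᵀ * U = 1 → Uᵀ * (Ls⁻¹ * Bs * (Ls⁻¹)ᵀ) * U = Lr⁻¹ * Br * (Lr⁻¹)ᵀ →
          ∃ Z : Matrix (Fin m) (Fin n) ℝ,
            Zᵀ * Ds * Z = Dr ∧ Zᵀ * Bs * Z = Br ∧ U = Lsᵀ * Z * (Lr⁻¹)ᵀ) := by
  have hs : IsUnit Ls.det := cholesky_isUnit_det hDs hLs
  have hr : IsUnit Lr.det := cholesky_isUnit_det hDr hLr
  have hsT : IsUnit Lsᵀ.det := by rwa [det_transpose]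
  have hrT : IsUnit Lrᵀ.det := by rwa [det_transpose]
  have hsl : Ls⁻¹ * Ls = 1 := nonsing_inv_mul Ls hs
  have hsr : Ls * Ls⁻¹ = 1 := mul_nonsing_inv Ls hs
  have hrl : Lr⁻¹ * Lr = 1 := nonsing_inv_mul Lr hr
  have hsTl : (Lsᵀ)⁻¹ * Lsᵀ = 1 := nonsing_inv_mul _ hsT
  have hsTr : Lsᵀ * (Lsᵀ)⁻¹ = 1 := mul_nonsing_inv _ hsT
  have hrTl : (Lrᵀ)⁻¹ * Lrᵀ = 1 := nonsing_inv_mul _ hrT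
  have hrTr : Lrᵀ * (Lrᵀ)⁻¹ = 1 := mul_nonsing_inv _ hrT
  constructor
  · intro Z hZ1 hZ2
    constructor
    · calc (Lsᵀ * Z * (Lr⁻¹)ᵀ)ᵀ * (Lsᵀ * Z * (Lr⁻¹)ᵀ)
          = Lr⁻¹ * ((Zᵀ * (Ls * Lsᵀ) * Z) * (Lrᵀ)⁻¹) := by
            simp only [transpose_mul, transpose_transpose, transpose_nonsing_inv,
              Matrix.mul_assoc]
      _ = Lr⁻¹ * (Dr * (Lrᵀ)⁻¹) := by
            rw [hLs.2.2, hZ1]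
      _ = 1 := by
            rw [← hLr.2.2, Matrix.mul_assoc, hrTr, Matrix.mul_one, hrl]
    · calc (Lsᵀ * Z * (Lr⁻¹)ᵀ)ᵀ * (Ls⁻¹ * Bs * (Ls⁻¹)ᵀ) * (Lsᵀ * Z * (Lr⁻¹)ᵀ)
          = Lr⁻¹ * (Zᵀ * ((Ls * Ls⁻¹) * Bs * ((Lsᵀ)⁻¹ * Lsᵀ)) * Z * (Lrᵀ)⁻¹) := by
            simp only [transpose_mul, transpose_transpose, transpose_nonsing_inv,
              Matrix.mul_assoc]
      _ = Lr⁻¹ * (Zᵀ * Bs * Z * (Lrᵀ)⁻¹) := by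
            rw [hsr, hsTl, Matrix.one_mul, Matrix.mul_one]
      _ = Lr⁻¹ * Br * (Lr⁻¹)ᵀ := by
            rw [hZ2, transpose_nonsing_inv, Matrix.mul_assoc]
  · intro U hU1 hU2
    refine ⟨(Lsᵀ)⁻¹ * U * Lrᵀ, ?_, ?_, ?_⟩
    · calc ((Lsᵀ)⁻¹ * U * Lrᵀ)ᵀ * Ds * ((Lsᵀ)⁻¹ * U * Lrᵀ)
          = Lr * (Uᵀ * (Ls⁻¹ * (Ls * Lsᵀ) * (Lsᵀ)⁻¹) * U * Lrᵀ) := by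
            rw [← hLs.2.2]
            simp only [transpose_mul, transpose_transpose, transpose_nonsing_inv,
              Matrix.mul_assoc]
      _ = Lr * ((Uᵀ * U) * Lrᵀ) := by
            simp [Matrix.mul_assoc, hsTr, hsl]
      _ = Dr := by rw [hU1, Matrix.one_mul, hLr.2.2]
    · calc ((Lsᵀ)⁻¹ * U * Lrᵀ)ᵀ * Bs * ((Lsᵀ)⁻¹ * U * Lrᵀ)
          = Lr * (Uᵀ * (Ls⁻¹ * Bs * (Ls⁻¹)ᵀ) * U * Lrᵀ) := by
            simp only [transpose_mul, transpose_transpose, transpose_nonsing_inv,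
              Matrix.mul_assoc]
      _ = Lr * (Lr⁻¹ * Br * (Lr⁻¹)ᵀ * Lrᵀ) := by rw [hU2]
      _ = Br := by
            rw [transpose_nonsing_inv, Matrix.mul_assoc, hrTl, Matrix.mul_one,
              ← Matrix.mul_assoc, mul_nonsing_inv Lr hr, Matrix.one_mul]
    · rw [transpose_nonsing_inv]
      calc U = (Lsᵀ * (Lsᵀ)⁻¹) * U * (Lrᵀ * (Lrᵀ)⁻¹) := by
              rw [hsTr, hrTr, Matrix.one_mul, Matrix.mul_one]
        _ = Lsᵀ * ((Lsᵀ)⁻¹ * U * Lrᵀ) * (Lrᵀ)⁻¹ := by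
              simp only [Matrix.mul_assoc]
end

section
/- Let A ∈ ℝ^{N×N}, let V ∈ ℝ^{N×n}, let A_1, …, A_k ∈ ℝ^{N×N} be a basis of matrices, let Φ = [vec(A_1) ⋯ vec(A_k)] ∈ ℝ^{N²×k} be the matrix of their vectorizations, and let P ∈ {0,1}^{N²×p} be a sampling matrix acting on vectorized matrices. Assume (1) vec(A) lies in the range of Φ, and (2) PᵀΦ has full column rank k. Then the least-squares problem min_{x ∈ ℝ^k} ‖Pᵀ vec(A) − PᵀΦ x‖₂² has a unique minimizer x* ∈ ℝ^k, and this minimizer satisfies ∑_{i=1}^{k} x*_i Vᵀ A_i V = Vᵀ A V; i.e., the matrix gappy POD approximation is exact. -/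
open Matrix

/-- Exactness of matrix gappy POD: if `vec A` lies in the span of the vectorized basis
matrices `Afam i` and the sampled (vectorized) basis has full column rank, then the
sampled least-squares problem has a unique minimizer `xs`, and the resulting
approximation `∑ i, xs i • Vᵀ (Afam i) V` equals `Vᵀ A V`. The sampling matrix
`P ∈ {0,1}^{N² × p}` is encoded by the injective map `ι` selecting `p` entries of a
vectorized `N × N` matrix, so that `Pᵀ vec M = fun j => M (ι j).1 (ι j).2`. -/
theorem stmt6 {N k p n : ℕ}
    (A : Matrix (Fin N) (Fin N) ℝ)
    (Afam : Fin k → Matrix (Fin N) (Fin N) ℝ)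
    (V : Matrix (Fin N) (Fin n) ℝ)
    (ι : Fin p → Fin N × Fin N) (hι : Function.Injective ι)
    (hrange : ∃ c : Fin k → ℝ, A = ∑ i : Fin k, c i • Afam i)
    (hrank : LinearIndependent ℝ
      (fun i : Fin k => fun j : Fin p => Afam i (ι j).1 (ι j).2)) :
    ∃ xs : Fin k → ℝ,
      (∀ x : Fin k → ℝ,
          ∑ j : Fin p, (A (ι j).1 (ι j).2 - ∑ i : Fin k, xs i * Afam i (ι j).1 (ι j).2) ^ 2
            ≤ ∑ j : Fin p,
                (A (ι j).1 (ι j).2 - ∑ i : Fin k, x i * Afam i (ι j).1 (ι j).2) ^ 2) ∧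
      (∀ y : Fin k → ℝ,
          (∀ x : Fin k → ℝ,
            ∑ j : Fin p, (A (ι j).1 (ι j).2 - ∑ i : Fin k, y i * Afam i (ι j).1 (ι j).2) ^ 2
              ≤ ∑ j : Fin p,
                  (A (ι j).1 (ι j).2 - ∑ i : Fin k, x i * Afam i (ι j).1 (ι j).2) ^ 2) →
          y = xs) ∧
      ∑ i : Fin k, xs i • (Vᵀ * Afam i * V) = Vᵀ * A * V := by

  obtain ⟨c, hc⟩ := hrange
  have hA : ∀ j : Fin p, A (ι j).1 (ι j).2 = ∑ i : Fin k, c i * Afam i (ι j).1 (ι j).2 := by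
    intro j
    rw [hc]
    simp [Matrix.sum_apply]
  have hzero : ∑ j : Fin p, (A (ι j).1 (ι j).2 - ∑ i : Fin k, c i * Afam i (ι j).1 (ι j).2) ^ 2 = 0 := by
    apply Finset.sum_eq_zero
    intro j _
    rw [hA j]; ring
  refine ⟨c, ?_, ?_, ?_⟩
  · intro x
    rw [hzero]
    exact Finset.sum_nonneg fun j _ => sq_nonneg _
  · intro y hy
    have h0 : ∑ j : Fin p, (A (ι j).1 (ι j).2 - ∑ i : Fin k, y i * Afam i (ι j).1 (ι j).2) ^ 2 = 0 := by
      have := hy c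
      rw [hzero] at this
      exact le_antisymm this (Finset.sum_nonneg fun j _ => sq_nonneg _)
    have hterm : ∀ j : Fin p, ∑ i : Fin k, y i * Afam i (ι j).1 (ι j).2 = ∑ i : Fin k, c i * Afam i (ι j).1 (ι j).2 := by
      intro j
      have := (Finset.sum_eq_zero_iff_of_nonneg (fun j _ => sq_nonneg _)).mp h0 j (Finset.mem_univ j)
      have h1 : A (ι j).1 (ι j).2 - ∑ i : Fin k, y i * Afam i (ι j).1 (ι j).2 = 0 := by
        exact pow_eq_zero_iff (by norm_num) |>.mp this
      have := sub_eq_zero.mp h1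
      rw [← this, hA j]
    have hdiff : ∑ i : Fin k, (y i - c i) • (fun j : Fin p => Afam i (ι j).1 (ι j).2) = 0 := by
      funext j
      simp only [Finset.sum_apply, Pi.smul_apply, smul_eq_mul, Pi.zero_apply, sub_mul]
      rw [Finset.sum_sub_distrib, hterm j, sub_self]
    have := Fintype.linearIndependent_iff.mp hrank (fun i => y i - c i) hdiff
    funext i
    have hz : y i - c i = 0 := this i
    linarith
  · rw [hc, Matrix.mul_sum, Matrix.sum_mul]
    apply Finset.sum_congr rfl
    intro i _
    rw [Matrix.mul_smul, Matrix.smul_mul]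
end

section
/- Let S ∈ {0,1}^{N×m} be a sampling matrix (m distinct columns of the N×N identity matrix), let Φ̃ ∈ ℝ^{N×n} satisfy Φ̃ᵀΦ̃ = Iₙ, let c̃ ∈ ℝ^N, and assume m ≥ n. Then there exists a matrix X ∈ ℝ^{m×n} satisfying XᵀX = Iₙ and Xᵀ Sᵀ c̃ = Φ̃ᵀ c̃ if and only if either (‖Φ̃ᵀ c̃‖₂ = ‖Sᵀ c̃‖₂ and m = n) or (‖Φ̃ᵀ c̃‖₂ ≤ ‖Sᵀ c̃‖₂ and m > n). -/
open Matrix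

/-- Euclidean norm of a real vector. -/
noncomputable def enorm {k : ℕ} (v : Fin k → ℝ) : ℝ :=
  Real.sqrt (∑ i : Fin k, v i ^ 2)

lemma dot_self_nonneg' {k : ℕ} (v : Fin k → ℝ) : 0 ≤ v ⬝ᵥ v :=
  Finset.sum_nonneg fun i _ => mul_self_nonneg _

lemma enorm_eq_sqrt_dot {k : ℕ} (v : Fin k → ℝ) :
    Real.sqrt (∑ i : Fin k, v i ^ 2) = Real.sqrt (v ⬝ᵥ v) := by
  simp [dotProduct, sq]

lemma householder {k : ℕ} (s v : Fin k → ℝ) (h : s ⬝ᵥ s = v ⬝ᵥ v) :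
    ∃ Q : Matrix (Fin k) (Fin k) ℝ, Qᵀ * Q = 1 ∧ Q.mulVec s = v := by
  by_cases hsv : s = v
  · exact ⟨1, by simp, by simp [hsv]⟩
  · set w : Fin k → ℝ := s - v with hw
    have hw0 : w ≠ 0 := sub_ne_zero.mpr hsv
    have hd : w ⬝ᵥ w ≠ 0 := fun h0 => hw0 (dotProduct_self_eq_zero.mp h0)
    set d : ℝ := w ⬝ᵥ w with hdd
    set c : ℝ := 2 / d with hc
    set W : Matrix (Fin k) (Fin k) ℝ := vecMulVec w w with hW
    have hWt : Wᵀ = W := by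
      ext i j; simp [hW, vecMulVec_apply, mul_comm]
    have hWW : W * W = d • W := by
      ext i j
      simp only [hW, mul_apply, vecMulVec_apply, Matrix.smul_apply, smul_eq_mul]
      have hs : (∑ x, (w i * w x) * (w x * w j)) = ∑ x, (w x * w x) * (w i * w j) :=
        Finset.sum_congr rfl fun x _ => by ring
      rw [hs, ← Finset.sum_mul]
      simp [hdd, dotProduct]
    have hWv : W.mulVec s = (w ⬝ᵥ s) • w := by
      ext i
      simp only [hW, mulVec, dotProduct, vecMulVec_apply, Pi.smul_apply, smul_eq_mul]
      have hs : (∑ x, (w i * w x) * s x) = ∑ x, (w x * s x) * w i :=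
        Finset.sum_congr rfl fun x _ => by ring
      rw [hs, ← Finset.sum_mul]
    refine ⟨1 - c • W, ?_, ?_⟩
    · have ht : (1 - c • W)ᵀ = 1 - c • W := by
        rw [transpose_sub, transpose_smul, hWt, transpose_one]
      rw [ht, sub_mul, mul_sub, mul_sub]
      simp only [one_mul, mul_one, Matrix.mul_smul, Matrix.smul_mul]
      rw [hWW, smul_smul, smul_smul]
      have hcc : c * c * d = c + c := by
        have hcd : c * d = 2 := by rw [hc]; exact div_mul_cancel₀ 2 hd
        rw [mul_assoc, hcd]; ring
      rw [hcc]
      module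
    · have hws : c * (w ⬝ᵥ s) = 1 := by
        have h1 : d = 2 * (w ⬝ᵥ s) := by
          simp only [hdd, hw]
          rw [sub_dotProduct, sub_dotProduct, dotProduct_sub, dotProduct_sub,
            dotProduct_comm v s]
          linarith [h]
        rw [hc, h1]
        have : (2: ℝ) * (w ⬝ᵥ s) ≠ 0 := by rw [← h1]; exact hd
        rw [div_mul_eq_mul_div]
        exact (div_eq_one_iff_eq this).mpr (by ring)
      rw [sub_mulVec, one_mulVec, smul_mulVec, hWv, smul_smul, hws, one_smul]
      simp [hw]

lemma enorm_eq {k : ℕ} (v : Fin k → ℝ) : _root_.enorm v = Real.sqrt (v ⬝ᵥ v) := by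
  simp [_root_.enorm, dotProduct, sq]

lemma dot_mulVec_eq {k l : ℕ} (A : Matrix (Fin k) (Fin l) ℝ) (x : Fin k → ℝ)
    (y : Fin l → ℝ) : x ⬝ᵥ (A *ᵥ y) = (Aᵀ *ᵥ x) ⬝ᵥ y := by
  rw [dotProduct_mulVec, ← mulVec_transpose]

lemma key {m n : ℕ} (hnm : n ≤ m) (s : Fin m → ℝ) (b : Fin n → ℝ) :
    (∃ X : Matrix (Fin m) (Fin n) ℝ, Xᵀ * X = 1 ∧ Xᵀ.mulVec s = b) ↔
      ((_root_.enorm b = _root_.enorm s ∧ m = n) ∨ (_root_.enorm b ≤ _root_.enorm s ∧ n < m)) := by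
  constructor
  · rintro ⟨X, hX, hb⟩
    have h1 : b ⬝ᵥ b = s ⬝ᵥ ((X * Xᵀ) *ᵥ s) := by
      rw [← hb, dot_mulVec_eq, transpose_transpose, mulVec_mulVec, dotProduct_comm]
    rcases hnm.lt_or_eq with hlt | heq
    · -- n < m : inequality
      set P : Matrix (Fin m) (Fin m) ℝ := X * Xᵀ with hPdef
      have hPt : Pᵀ = P := by rw [hPdef, transpose_mul, transpose_transpose]
      have hP2 : P * P = P := by
        rw [hPdef, Matrix.mul_assoc, ← Matrix.mul_assoc Xᵀ X Xᵀ, hX, Matrix.one_mul]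
      have e1 : (P *ᵥ s) ⬝ᵥ (P *ᵥ s) = (P *ᵥ s) ⬝ᵥ s := by
        nth_rewrite 1 [dot_mulVec_eq, hPt, mulVec_mulVec, hP2]
        rfl
      have e2 : (P *ᵥ s) ⬝ᵥ s = s ⬝ᵥ (P *ᵥ s) := dotProduct_comm _ _
      have h3 : (s - P *ᵥ s) ⬝ᵥ (s - P *ᵥ s) = s ⬝ᵥ s - s ⬝ᵥ (P *ᵥ s) := by
        simp only [sub_dotProduct, dotProduct_sub]
        linarith
      have h4 := dot_self_nonneg' (s - P *ᵥ s)
      right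
      refine ⟨?_, hlt⟩
      rw [enorm_eq, enorm_eq]
      exact Real.sqrt_le_sqrt (by rw [h1]; linarith)
    · -- m = n : equality
      subst heq
      have hXX : X * Xᵀ = 1 := mul_eq_one_comm.mp hX
      left
      refine ⟨?_, rfl⟩
      rw [enorm_eq, enorm_eq, h1, hXX, one_mulVec]
  · intro h
    have hbs : b ⬝ᵥ b ≤ s ⬝ᵥ s := by
      rcases h with ⟨he, _⟩ | ⟨hle, _⟩
      · rw [enorm_eq, enorm_eq, Real.sqrt_inj (dot_self_nonneg' b) (dot_self_nonneg' s)]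
          at he
        exact he.le
      · rw [enorm_eq, enorm_eq, Real.sqrt_le_sqrt_iff (dot_self_nonneg' s)] at hle
        exact hle
    set r : ℝ := Real.sqrt (s ⬝ᵥ s - b ⬝ᵥ b) with hr
    set g : ℕ → ℝ := fun i => if hi : i < n then b ⟨i, hi⟩ ^ 2 else if i = n then r ^ 2 else 0
      with hg
    set v : Fin m → ℝ := fun i => if hi : (i : ℕ) < n then b ⟨i, hi⟩ else
      if (i : ℕ) = n then r else 0 with hv
    have hvg : ∀ i : Fin m, v i * v i = g i.val := by
      intro i
      simp only [hv, hg]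
      split_ifs <;> ring
    have hsum : v ⬝ᵥ v = b ⬝ᵥ b + ∑ i ∈ Finset.Ico n m, g i := by
      have h1 : v ⬝ᵥ v = ∑ i ∈ Finset.range m, g i := by
        rw [dotProduct, Finset.sum_congr rfl fun i _ => hvg i,
          Fin.sum_univ_eq_sum_range]
      have h2 : ∑ i ∈ Finset.range m, g i
          = ∑ i ∈ Finset.range n, g i + ∑ i ∈ Finset.Ico n m, g i := by
        rw [Finset.range_eq_Ico, Finset.range_eq_Ico]
        exact (Finset.sum_Ico_consecutive _ (Nat.zero_le n) hnm).symm
      have h3 : ∑ i ∈ Finset.range n, g i = b ⬝ᵥ b := by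
        rw [← Fin.sum_univ_eq_sum_range, dotProduct]
        refine Finset.sum_congr rfl fun i _ => ?_
        simp only [hg, i.isLt, dif_pos, Fin.eta]
        ring
      rw [h1, h2, h3]
    have hvv : s ⬝ᵥ s = v ⬝ᵥ v := by
      rcases h with ⟨he, hmn⟩ | ⟨hle, hlt⟩
      · rw [enorm_eq, enorm_eq, Real.sqrt_inj (dot_self_nonneg' b) (dot_self_nonneg' s)]
          at he
        have : Finset.Ico n m = ∅ := by rw [hmn]; simp
        rw [hsum, this, Finset.sum_empty, add_zero, he]
      · have htail : ∑ i ∈ Finset.Ico n m, g i = r ^ 2 := by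
          rw [Finset.sum_eq_single_of_mem n (Finset.mem_Ico.mpr ⟨le_refl n, hlt⟩)]
          · simp [hg]
          · intro i hi hne
            have : ¬ i < n := Nat.not_lt.mpr (Finset.mem_Ico.mp hi).1
            simp [hg, this, hne]
        rw [hsum, htail, hr, Real.sq_sqrt (by linarith)]
        ring
    obtain ⟨Q, hQ, hQs⟩ := householder s v hvv
    set X₀ : Matrix (Fin m) (Fin n) ℝ :=
      Matrix.of fun i j => if i = Fin.castLE hnm j then 1 else 0 with hX₀def
    have hX₀ : X₀ᵀ * X₀ = 1 := by
      ext i j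
      simp only [hX₀def, mul_apply, transpose_apply, of_apply, ite_mul, one_mul, zero_mul,
        one_apply]
      rw [Finset.sum_ite_eq' Finset.univ (Fin.castLE hnm i)]
      simp [Fin.castLE_inj, eq_comm]
    have hX₀v : X₀ᵀ *ᵥ v = b := by
      ext j
      simp only [hX₀def, mulVec, dotProduct, transpose_apply, of_apply, ite_mul, one_mul,
        zero_mul]
      rw [Finset.sum_ite_eq' Finset.univ (Fin.castLE hnm j)]
      simp only [Finset.mem_univ, if_pos]
      simp [hv, j.isLt]
    refine ⟨Qᵀ * X₀, ?_, ?_⟩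
    · rw [transpose_mul, transpose_transpose, Matrix.mul_assoc,
        ← Matrix.mul_assoc Q Qᵀ X₀, mul_eq_one_comm.mp hQ, Matrix.one_mul, hX₀]
    · rw [transpose_mul, transpose_transpose, ← mulVec_mulVec, hQs, hX₀v]

/-- Solvability of the two-term Taylor equation (Lemma on quadratic solvability):
an `m × n` matrix `X` with orthonormal columns satisfying `Xᵀ Sᵀ c̃ = Φ̃ᵀ c̃` exists iff
either the two norms agree and `m = n`, or `‖Φ̃ᵀ c̃‖₂ ≤ ‖Sᵀ c̃‖₂` and `m > n`. The
sampling matrix `S` (distinct columns of the identity) is encoded by the injective map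
`ι`, so that `Sᵀ c̃ = fun j => c̃ (ι j)`. -/
theorem stmt7 {N m n : ℕ} (hnm : n ≤ m)
    (ι : Fin m → Fin N) (hι : Function.Injective ι)
    (Phi : Matrix (Fin N) (Fin n) ℝ) (hPhi : Phiᵀ * Phi = 1)
    (c : Fin N → ℝ) :
    (∃ X : Matrix (Fin m) (Fin n) ℝ,
        Xᵀ * X = 1 ∧ Xᵀ.mulVec (fun j => c (ι j)) = Phiᵀ.mulVec c)
      ↔ ((_root_.enorm (Phiᵀ.mulVec c) = _root_.enorm (fun j => c (ι j)) ∧ m = n) ∨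
         (_root_.enorm (Phiᵀ.mulVec c) ≤ _root_.enorm (fun j => c (ι j)) ∧ n < m)) := by
  simpa [eq_comm] using key hnm (fun j => c (ι j)) (Phiᵀ.mulVec c)
end

section
/- Let A ∈ ℝ^{N×N} be symmetric positive definite with lower-triangular Cholesky factor L (A = LLᵀ), let V ∈ ℝ^{N×n} have full column rank, let L_φ be the lower-triangular Cholesky factor of VᵀAV, let c ∈ ℝ^N, and let S ∈ ℝ^{N×m} consist of the first m columns of the N×N identity matrix with m ≥ n. Then there exists Z ∈ ℝ^{m×n} satisfying both Zᵀ (SᵀAS) Z = VᵀAV and Zᵀ Sᵀ c = Vᵀ c if and only if there exists X ∈ ℝ^{m×n} satisfying XᵀX = Iₙ and Xᵀ Sᵀ L⁻¹ c = L_φ⁻¹ Vᵀ c. The correspondence is given by X = (Sᵀ Lᵀ S) Z L_φ⁻ᵀ. -/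
open Matrix

lemma chol_isUnit {k : ℕ} {L : Matrix (Fin k) (Fin k) ℝ}
    (h1 : ∀ i j : Fin k, i < j → L i j = 0) (h2 : ∀ i : Fin k, 0 < L i i) :
    IsUnit L.det := by
  have hdet : L.det = ∏ i, L i i :=
    Matrix.det_of_lowerTriangular L (fun i j hij => h1 _ _ hij)
  rw [hdet]
  exact (Finset.prod_pos (fun i _ => h2 i)).ne'.isUnit

lemma sum_castLE {N m : ℕ} (hmN : m ≤ N) (f : Fin N → ℝ)
    (hf : ∀ k : Fin N, m ≤ (k : ℕ) → f k = 0) :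
    ∑ k : Fin N, f k = ∑ j : Fin m, f (Fin.castLE hmN j) := by
  have : ∑ j : Fin m, f (Fin.castLE hmN j)
      = ∑ k ∈ Finset.univ.map (Fin.castLEEmb hmN), f k :=
    (Finset.sum_map Finset.univ (Fin.castLEEmb hmN) f).symm
  rw [this]
  symm
  apply Finset.sum_subset (Finset.subset_univ _)
  intro k _ hk
  apply hf
  by_contra h
  push_neg at h
  exact hk (Finset.mem_map.mpr ⟨⟨k, h⟩, Finset.mem_univ _, rfl⟩)

/-- Equivalence between the gradient/Hessian matching conditions and the orthonormal
reformulation, with the explicit correspondence `X = (Sᵀ Lᵀ S) Z L_φ⁻ᵀ`. Here `S`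
consists of the first `m` columns of the `N × N` identity, encoded by `Fin.castLE`, so
that `Sᵀ M S = M.submatrix (Fin.castLE hmN) (Fin.castLE hmN)` and
`Sᵀ v = fun j => v (Fin.castLE hmN j)`. -/
theorem stmt14 {N m n : ℕ} (hnm : n ≤ m) (hmN : m ≤ N)
    (A : Matrix (Fin N) (Fin N) ℝ) (hA : A.PosDef)
    (L : Matrix (Fin N) (Fin N) ℝ) (hL : IsCholeskyFactor L A)
    (V : Matrix (Fin N) (Fin n) ℝ) (hV : V.rank = n)
    (Lphi : Matrix (Fin n) (Fin n) ℝ) (hLphi : IsCholeskyFactor Lphi (Vᵀ * A * V))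
    (c : Fin N → ℝ)
    (cl : Fin m → Fin N) (hcl : cl = Fin.castLE hmN) :
    (∀ Z : Matrix (Fin m) (Fin n) ℝ,
        Zᵀ * (A.submatrix cl cl) * Z = Vᵀ * A * V →
        Zᵀ.mulVec (fun j => c (cl j)) = Vᵀ.mulVec c →
          (Lᵀ.submatrix cl cl * Z * (Lphi⁻¹)ᵀ)ᵀ * (Lᵀ.submatrix cl cl * Z * (Lphi⁻¹)ᵀ) = 1 ∧
          (Lᵀ.submatrix cl cl * Z * (Lphi⁻¹)ᵀ)ᵀ.mulVec (fun j => L⁻¹.mulVec c (cl j))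
            = Lphi⁻¹.mulVec (Vᵀ.mulVec c)) ∧
    (∀ X : Matrix (Fin m) (Fin n) ℝ,
        Xᵀ * X = 1 →
        Xᵀ.mulVec (fun j => L⁻¹.mulVec c (cl j)) = Lphi⁻¹.mulVec (Vᵀ.mulVec c) →
          ∃ Z : Matrix (Fin m) (Fin n) ℝ,
            Zᵀ * (A.submatrix cl cl) * Z = Vᵀ * A * V ∧
            Zᵀ.mulVec (fun j => c (cl j)) = Vᵀ.mulVec c ∧
            X = Lᵀ.submatrix cl cl * Z * (Lphi⁻¹)ᵀ) := by
  obtain ⟨hL1, hL2, hL3⟩ := hL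
  obtain ⟨hP1, hP2, hP3⟩ := hLphi
  have hLdet : IsUnit L.det := chol_isUnit hL1 hL2
  have hPdet : IsUnit Lphi.det := chol_isUnit hP1 hP2
  have hPTdet : IsUnit Lphiᵀ.det := by rwa [Matrix.det_transpose]
  set M : Matrix (Fin m) (Fin m) ℝ := L.submatrix cl cl with hMdef
  -- M is lower triangular with positive diagonal
  have hM1 : ∀ i j : Fin m, i < j → M i j = 0 := by
    intro i j hij
    apply hL1
    subst hcl
    exact hij
  have hM2 : ∀ i : Fin m, 0 < M i i := fun i => hL2 _
  have hMdet : IsUnit M.det := chol_isUnit hM1 hM2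
  have hMTdet : IsUnit Mᵀ.det := by rwa [Matrix.det_transpose]
  have hMT : Lᵀ.submatrix cl cl = Mᵀ := by
    ext i j; simp [hMdef]
  -- key vanishing: for i : Fin m, k : Fin N with m ≤ k, L (cl i) k = 0
  have hvan : ∀ (i : Fin m) (k : Fin N), (m : ℕ) ≤ (k : ℕ) → L (cl i) k = 0 := by
    intro i k hk
    apply hL1
    subst hcl
    rw [Fin.lt_def]
    exact lt_of_lt_of_le i.isLt hk
  -- M * Mᵀ = A.submatrix cl cl
  have hMMT : M * Mᵀ = A.submatrix cl cl := by
    subst hcl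
    ext i j
    simp only [Matrix.mul_apply, hMdef, Matrix.submatrix_apply, Matrix.transpose_apply]
    rw [← hL3, Matrix.mul_apply,
      sum_castLE hmN _ (fun k hk => by simp [hvan i k hk])]
    simp [Matrix.transpose_apply]
  -- M.mulVec (Sᵀ L⁻¹ c) = Sᵀ c
  have hMc : M.mulVec (fun j => L⁻¹.mulVec c (cl j)) = fun j => c (cl j) := by
    subst hcl
    funext i
    have h1 : L.mulVec (L⁻¹.mulVec c) = c := by
      rw [Matrix.mulVec_mulVec, Matrix.mul_nonsing_inv _ hLdet, Matrix.one_mulVec]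
    calc M.mulVec (fun j => L⁻¹.mulVec c (Fin.castLE hmN j)) i
        = ∑ x : Fin m, L (Fin.castLE hmN i) (Fin.castLE hmN x)
            * L⁻¹.mulVec c (Fin.castLE hmN x) := rfl
      _ = ∑ k : Fin N, L (Fin.castLE hmN i) k * L⁻¹.mulVec c k :=
          (sum_castLE hmN (fun k => L (Fin.castLE hmN i) k * L⁻¹.mulVec c k)
            (fun k hk => by show L (Fin.castLE hmN i) k * L⁻¹.mulVec c k = 0; rw [hvan i k hk, zero_mul])).symm
      _ = L.mulVec (L⁻¹.mulVec c) (Fin.castLE hmN i) := rfl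
      _ = c (Fin.castLE hmN i) := by rw [h1]
  -- cancellation helpers
  have cP1 : Lphi⁻¹ * Lphi = 1 := Matrix.nonsing_inv_mul _ hPdet
  have cP2 : Lphi * Lphi⁻¹ = 1 := Matrix.mul_nonsing_inv _ hPdet
  have cP3 : Lphiᵀ * (Lphi⁻¹)ᵀ = 1 := by
    rw [← Matrix.transpose_mul, cP1, Matrix.transpose_one]
  have cP4 : (Lphi⁻¹)ᵀ * Lphiᵀ = 1 := by
    rw [← Matrix.transpose_mul, cP2, Matrix.transpose_one]
  have cM1 : M⁻¹ * M = 1 := Matrix.nonsing_inv_mul _ hMdet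
  have cM2 : Mᵀ * Mᵀ⁻¹ = 1 := Matrix.mul_nonsing_inv _ hMTdet
  constructor
  · intro Z hZ1 hZ2
    rw [hMT]
    constructor
    · calc (Mᵀ * Z * (Lphi⁻¹)ᵀ)ᵀ * (Mᵀ * Z * (Lphi⁻¹)ᵀ)
          = Lphi⁻¹ * Zᵀ * (M * Mᵀ) * Z * (Lphi⁻¹)ᵀ := by
            simp only [Matrix.transpose_mul, Matrix.transpose_transpose, Matrix.mul_assoc]
        _ = Lphi⁻¹ * (Zᵀ * A.submatrix cl cl * Z) * (Lphi⁻¹)ᵀ := by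
            rw [hMMT]; simp only [Matrix.mul_assoc]
        _ = Lphi⁻¹ * (Lphi * Lphiᵀ) * (Lphi⁻¹)ᵀ := by rw [hZ1, hP3]
        _ = 1 := by
            rw [← Matrix.mul_assoc, cP1, Matrix.one_mul, cP3]
    · have hXT : (Mᵀ * Z * (Lphi⁻¹)ᵀ)ᵀ = Lphi⁻¹ * Zᵀ * M := by
        simp only [Matrix.transpose_mul, Matrix.transpose_transpose, Matrix.mul_assoc]
      rw [hXT, ← Matrix.mulVec_mulVec, ← Matrix.mulVec_mulVec, hMc, hZ2]
  · intro X hX1 hX2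
    refine ⟨Mᵀ⁻¹ * X * Lphiᵀ, ?_, ?_, ?_⟩
    · calc (Mᵀ⁻¹ * X * Lphiᵀ)ᵀ * A.submatrix cl cl * (Mᵀ⁻¹ * X * Lphiᵀ)
          = Lphi * Xᵀ * (M⁻¹ * (M * (Mᵀ * (Mᵀ⁻¹ * (X * Lphiᵀ))))) := by
            rw [← hMMT]
            simp only [Matrix.transpose_mul, Matrix.transpose_nonsing_inv,
              Matrix.transpose_transpose, Matrix.mul_assoc]
        _ = Lphi * Xᵀ * (X * Lphiᵀ) := by
            rw [← Matrix.mul_assoc Mᵀ, cM2, Matrix.one_mul,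
              ← Matrix.mul_assoc M⁻¹, cM1, Matrix.one_mul]
        _ = Vᵀ * A * V := by
            rw [← Matrix.mul_assoc, Matrix.mul_assoc Lphi, hX1, Matrix.mul_one, hP3]
    · have hZT : (Mᵀ⁻¹ * X * Lphiᵀ)ᵀ = Lphi * Xᵀ * M⁻¹ := by
        simp only [Matrix.transpose_mul, Matrix.transpose_nonsing_inv,
          Matrix.transpose_transpose, Matrix.mul_assoc]
      have hMinvc : M⁻¹.mulVec (fun j => c (cl j)) = fun j => L⁻¹.mulVec c (cl j) := by
        rw [← hMc, Matrix.mulVec_mulVec, cM1, Matrix.one_mulVec]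
      rw [hZT, ← Matrix.mulVec_mulVec, ← Matrix.mulVec_mulVec, hMinvc, hX2,
        Matrix.mulVec_mulVec, cP2, Matrix.one_mulVec]
    · rw [hMT]
      rw [Matrix.mul_assoc, Matrix.mul_assoc, cP3, Matrix.mul_one,
        ← Matrix.mul_assoc, cM2, Matrix.one_mul]
end
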